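/- For every α ∈ (0,1), c > 0, a > 0 and t > 0, the number variance grows like L^{1−α}: lim_{L→∞} L^{α−1} V_t^{α,c,a}[L] = (4ct/(aπ)) ∫₀^∞ φ^{α−2} (1 − cos φ) dφ, and this limit is a finite strictly positive constant. -/

import Mathlib

open MeasureTheory Filter Set

/-- The averaged number variance of the infinite system of independent symmetric
`α`-stable processes started from the equispaced-averaged configuration. -/
noncomputable def numVar (α c a t L : ℝ) : ℝ :=
  L / a + (2 / Real.pi) * ∫ θ in Set.Ioi (0:ℝ),
    Real.exp (-(2 * c * t * (θ / a) ^ α)) * (Real.cos (L * θ / a) - 1) / θ ^ 2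

open Real Topology
open scoped ENNReal

section Aux

lemma one_sub_cos_nonneg (x : ℝ) : 0 ≤ 1 - Real.cos x := by nlinarith [Real.cos_le_one x]

lemma one_sub_cos_le_sq (x : ℝ) : 1 - Real.cos x ≤ x ^ 2 / 2 := by
  have h2 : Real.cos (2 * (x/2)) = 1 - 2 * Real.sin (x/2) ^ 2 := by
    rw [Real.cos_two_mul']
    nlinarith [Real.sin_sq_add_cos_sq (x/2)]
  have hxx : 2 * (x/2) = x := by ring
  rw [hxx] at h2
  have h3 : Real.sin (x/2) ^ 2 ≤ (x/2) ^ 2 := Real.sin_sq_le_sq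
  nlinarith

lemma one_sub_cos_le_two (x : ℝ) : 1 - Real.cos x ≤ 2 := by nlinarith [Real.neg_one_le_cos x]

lemma meas_aux (r β : ℝ) : Measurable (fun x : ℝ => x ^ (β - 2) * (1 - Real.cos (r * x))) := by
  fun_prop

/-- master integrability lemma -/
lemma master {β : ℝ} (hβ0 : 0 ≤ β) (hβ1 : β < 1) (r : ℝ) :
    IntegrableOn (fun x : ℝ => x ^ (β - 2) * (1 - Real.cos (r * x))) (Ioi 0) := by
  have hsplit : (Ioc (0:ℝ) 1) ∪ (Ioi (1:ℝ)) = Ioi (0:ℝ) := Ioc_union_Ioi_eq_Ioi zero_le_one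
  rw [← hsplit]
  apply IntegrableOn.union
  · -- on Ioc 0 1, bounded by r^2/2
    apply Integrable.mono' (integrableOn_const (C := r ^ 2 / 2) measure_Ioc_lt_top.ne)
      ((meas_aux r β).aestronglyMeasurable)
    refine (ae_restrict_iff' measurableSet_Ioc).2 (ae_of_all _ fun x hx => ?_)
    have hx0 : 0 < x := hx.1
    have hnn : 0 ≤ x ^ (β - 2) * (1 - Real.cos (r * x)) :=
      mul_nonneg (Real.rpow_nonneg hx0.le _) (one_sub_cos_nonneg _)
    rw [Real.norm_eq_abs, abs_of_nonneg hnn]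
    have h1 : 1 - Real.cos (r * x) ≤ (r * x) ^ 2 / 2 := one_sub_cos_le_sq _
    have h2 : x ^ (β - 2) * ((r*x) ^ 2/2) = r ^ 2/2 * (x ^ (β-2) * x ^ (2:ℝ)) := by
      rw [Real.rpow_two]; ring
    rw [← Real.rpow_add hx0] at h2
    have hβe : β - 2 + 2 = β := by ring
    rw [hβe] at h2
    have h3 : x ^ β ≤ 1 := Real.rpow_le_one hx0.le hx.2 hβ0
    calc x ^ (β - 2) * (1 - Real.cos (r * x)) ≤ x ^ (β-2) * ((r*x) ^ 2/2) :=
          mul_le_mul_of_nonneg_left h1 (Real.rpow_nonneg hx0.le _)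
      _ = r ^ 2/2 * x ^ β := h2
      _ ≤ r ^ 2/2 * 1 := by nlinarith [sq_nonneg r, Real.rpow_nonneg hx0.le β]
      _ = r ^ 2/2 := mul_one _
  · -- on Ioi 1, bounded by 2 * x^(β-2)
    apply Integrable.mono'
      ((integrableOn_Ioi_rpow_of_lt (show β - 2 < -1 by linarith) one_pos).const_mul 2)
      ((meas_aux r β).aestronglyMeasurable)
    refine (ae_restrict_iff' measurableSet_Ioi).2 (ae_of_all _ fun x hx => ?_)
    have hx0 : (0:ℝ) < x := lt_trans one_pos hx
    have hnn : 0 ≤ x ^ (β - 2) * (1 - Real.cos (r * x)) :=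
      mul_nonneg (Real.rpow_nonneg hx0.le _) (one_sub_cos_nonneg _)
    rw [Real.norm_eq_abs, abs_of_nonneg hnn, mul_comm (2:ℝ)]
    exact mul_le_mul_of_nonneg_left (one_sub_cos_le_two _) (Real.rpow_nonneg hx0.le _)

lemma one_sub_cos_nonneg' (x : ℝ) : 0 ≤ 1 - Real.cos x := by nlinarith [Real.cos_le_one x]

lemma tendsto_exp_neg_mul (x : ℝ) (hx : 0 < x) :
    Tendsto (fun s : ℝ => Real.exp (-(x * s))) atTop (𝓝 0) :=
  Real.tendsto_exp_atBot.comp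
    (tendsto_neg_atTop_atBot.comp (Tendsto.const_mul_atTop hx tendsto_id))

lemma tendsto_mul_exp_neg_mul (x : ℝ) (hx : 0 < x) :
    Tendsto (fun s : ℝ => s * Real.exp (-(x * s))) atTop (𝓝 0) := by
  have h1 : Tendsto (fun s : ℝ => x * s) atTop atTop :=
    Tendsto.const_mul_atTop hx tendsto_id
  have h2 := (tendsto_pow_mul_exp_neg_atTop_nhds_zero 1).comp h1
  have h3 := h2.const_mul (1/x)
  rw [mul_zero] at h3
  apply h3.congr
  intro s
  simp only [Function.comp_apply, pow_one]
  field_simp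

/-- Laplace-type: ∫ s in Ioi 0, s * exp(-(x*s)) = 1/x², with integrability. -/
lemma lapl1_deriv (x : ℝ) (hx : 0 < x) (s : ℝ) :
    HasDerivAt (fun s : ℝ => -(Real.exp (-(x * s)) * (s / x + 1 / x ^ 2)))
      (s * Real.exp (-(x * s))) s := by
  have h1 : HasDerivAt (fun s : ℝ => -(x * s)) (-x) s := by
    have := ((hasDerivAt_id s).const_mul x).neg; simp only [id, mul_one] at this; exact this
  have h2 := h1.exp
  have h3 : HasDerivAt (fun s : ℝ => s / x + 1 / x ^ 2) (1 / x) s :=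
    ((hasDerivAt_id s).div_const x).add_const _
  have h4 := (h2.mul h3).neg
  refine h4.congr_deriv ?_
  field_simp
  ring

lemma lapl1_tendsto (x : ℝ) (hx : 0 < x) :
    Tendsto (fun s : ℝ => -(Real.exp (-(x * s)) * (s / x + 1 / x ^ 2))) atTop (𝓝 0) := by
  have h1 := ((tendsto_mul_exp_neg_mul x hx).div_const x).add
    ((tendsto_exp_neg_mul x hx).div_const (x ^ 2))
  simp only [zero_div, add_zero] at h1
  have h2 := h1.neg
  rw [neg_zero] at h2
  apply h2.congr
  intro s
  field_simp

lemma lapl1_pos (x : ℝ) (hx : 0 < x) (s : ℝ) (hs : s ∈ Ioi (0:ℝ)) :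
    0 ≤ s * Real.exp (-(x * s)) := mul_nonneg (le_of_lt hs) (Real.exp_pos _).le

lemma lapl1_integrable (x : ℝ) (hx : 0 < x) :
    IntegrableOn (fun s : ℝ => s * Real.exp (-(x * s))) (Ioi 0) :=
  integrableOn_Ioi_deriv_of_nonneg' (fun s _ => lapl1_deriv x hx s) (lapl1_pos x hx)
    (lapl1_tendsto x hx)

lemma lapl1_integral (x : ℝ) (hx : 0 < x) :
    ∫ s in Ioi (0:ℝ), s * Real.exp (-(x * s)) = 1 / x ^ 2 := by
  rw [integral_Ioi_of_hasDerivAt_of_nonneg' (fun s _ => lapl1_deriv x hx s) (lapl1_pos x hx)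
    (lapl1_tendsto x hx)]
  norm_num

/-- Laplace of 1 - cos. -/
lemma lapl2_deriv (s : ℝ) (hs : 0 < s) (x : ℝ) :
    HasDerivAt (fun x : ℝ => -(Real.exp (-(s * x)) / s) -
        Real.exp (-(s * x)) * (Real.sin x - s * Real.cos x) / (s ^ 2 + 1))
      (Real.exp (-(s * x)) * (1 - Real.cos x)) x := by
  have h1 : HasDerivAt (fun x : ℝ => -(s * x)) (-s) x := by
    have := ((hasDerivAt_id x).const_mul s).neg; simp only [id, mul_one] at this; exact this
  have h2 := h1.exp
  have h3 : HasDerivAt (fun x : ℝ => Real.sin x - s * Real.cos x)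
      (Real.cos x + s * Real.sin x) x := by
    have := (Real.hasDerivAt_sin x).sub ((Real.hasDerivAt_cos x).const_mul s)
    refine this.congr_deriv ?_
    ring
  have h4 := ((h2.div_const s).neg).sub ((h2.mul h3).div_const (s ^ 2 + 1))
  refine h4.congr_deriv ?_
  have hs1 : s ^ 2 + 1 ≠ 0 := by positivity
  field_simp
  ring

lemma lapl2_tendsto (s : ℝ) (hs : 0 < s) :
    Tendsto (fun x : ℝ => -(Real.exp (-(s * x)) / s) -
        Real.exp (-(s * x)) * (Real.sin x - s * Real.cos x) / (s ^ 2 + 1)) atTop (𝓝 0) := by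
  have h1 : Tendsto (fun x : ℝ => -(Real.exp (-(s * x)) / s)) atTop (𝓝 0) := by
    have := ((tendsto_exp_neg_mul s hs).div_const s).neg
    simpa using this
  have h2 : Tendsto (fun x : ℝ =>
      Real.exp (-(s * x)) * (Real.sin x - s * Real.cos x) / (s ^ 2 + 1)) atTop (𝓝 0) := by
    apply squeeze_zero_norm (a := fun x => Real.exp (-(s * x)) * ((1 + s) / (s ^ 2 + 1)))
    · intro x
      rw [Real.norm_eq_abs, abs_div, abs_of_pos (show (0:ℝ) < s ^ 2 + 1 by positivity), abs_mul,
        abs_of_pos (Real.exp_pos _), div_le_iff₀ (show (0:ℝ) < s ^ 2 + 1 by positivity)]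
      have hb : |Real.sin x - s * Real.cos x| ≤ 1 + s := by
        have h1 := abs_le.1 (Real.abs_sin_le_one x)
        have h2 := abs_le.1 (Real.abs_cos_le_one x)
        rw [abs_le]
        constructor <;> nlinarith
      calc Real.exp (-(s * x)) * |Real.sin x - s * Real.cos x|
          ≤ Real.exp (-(s * x)) * (1 + s) :=
            mul_le_mul_of_nonneg_left hb (Real.exp_pos _).le
        _ = Real.exp (-(s * x)) * ((1 + s) / (s ^ 2 + 1)) * (s ^ 2 + 1) := by
            field_simp
    · have := (tendsto_exp_neg_mul s hs).mul_const ((1 + s) / (s ^ 2 + 1))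
      simpa using this
  have := h1.sub h2
  simpa using this

lemma lapl2_pos (s : ℝ) (hs : 0 < s) (x : ℝ) (hx : x ∈ Ioi (0:ℝ)) :
    0 ≤ Real.exp (-(s * x)) * (1 - Real.cos x) :=
  mul_nonneg (Real.exp_pos _).le (one_sub_cos_nonneg' x)

lemma lapl2_integrable (s : ℝ) (hs : 0 < s) :
    IntegrableOn (fun x : ℝ => Real.exp (-(s * x)) * (1 - Real.cos x)) (Ioi 0) :=
  integrableOn_Ioi_deriv_of_nonneg' (fun x _ => lapl2_deriv s hs x) (lapl2_pos s hs)
    (lapl2_tendsto s hs)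

lemma lapl2_integral (s : ℝ) (hs : 0 < s) :
    ∫ x in Ioi (0:ℝ), Real.exp (-(s * x)) * (1 - Real.cos x) = 1 / s - s / (s ^ 2 + 1) := by
  rw [integral_Ioi_of_hasDerivAt_of_nonneg' (fun x _ => lapl2_deriv s hs x) (lapl2_pos s hs)
    (lapl2_tendsto s hs)]
  have hs1 : s ^ 2 + 1 ≠ 0 := by positivity
  norm_num
  field_simp
  ring

/-- integrability of (1 - cos (r x))/x^2 on (0,∞) -/
lemma int_one_sub_cos (r : ℝ) :
    IntegrableOn (fun x : ℝ => (1 - Real.cos (r * x)) / x ^ 2) (Ioi 0) := by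
  refine (master le_rfl one_pos r).congr_fun (fun x hx => ?_) measurableSet_Ioi
  dsimp only
  rw [Real.rpow_sub hx, Real.rpow_zero, Real.rpow_two]
  field_simp

lemma key_integral : ∫ x in Ioi (0:ℝ), (1 - Real.cos x) / x ^ 2 = Real.pi / 2 := by
  set f : ℝ → ℝ → ℝ := fun x s => (1 - Real.cos x) * (s * Real.exp (-(x * s))) with hf
  have hfc : Continuous (fun p : ℝ × ℝ => f p.1 p.2) := by
    apply Continuous.mul
    · exact (continuous_const.sub (Real.continuous_cos.comp continuous_fst))
    · exact continuous_snd.mul ((Real.continuous_exp.comp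
        ((continuous_fst.mul continuous_snd).neg)))
  have hfm : AEStronglyMeasurable (fun p : ℝ × ℝ => f p.1 p.2)
      ((volume.restrict (Ioi (0:ℝ))).prod (volume.restrict (Ioi (0:ℝ)))) :=
    hfc.aestronglyMeasurable
  have hmaster : IntegrableOn (fun x : ℝ => (1 - Real.cos x) / x ^ 2) (Ioi 0) := by
    have := int_one_sub_cos 1
    simpa using this
  have hinner : ∀ x ∈ Ioi (0:ℝ), ∫ s in Ioi (0:ℝ), f x s = (1 - Real.cos x) / x ^ 2 := by
    intro x hx
    rw [hf]
    simp only
    rw [integral_const_mul, lapl1_integral x hx]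
    field_simp
  have hint : Integrable (fun p : ℝ × ℝ => f p.1 p.2)
      ((volume.restrict (Ioi (0:ℝ))).prod (volume.restrict (Ioi (0:ℝ)))) := by
    rw [integrable_prod_iff hfm]
    constructor
    · filter_upwards [ae_restrict_mem measurableSet_Ioi] with x hx
      exact (lapl1_integrable x hx).const_mul _
    · apply hmaster.congr
      filter_upwards [ae_restrict_mem measurableSet_Ioi] with x hx
      rw [← hinner x hx]
      apply integral_congr_ae
      filter_upwards [ae_restrict_mem measurableSet_Ioi] with s hs
      rw [Real.norm_eq_abs, abs_of_nonneg]
      exact mul_nonneg (one_sub_cos_nonneg x) (mul_nonneg (le_of_lt hs) (Real.exp_pos _).le)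
  have hswap := integral_integral_swap (f := f) hint
  have hL : ∫ x in Ioi (0:ℝ), ∫ s in Ioi (0:ℝ), f x s =
      ∫ x in Ioi (0:ℝ), (1 - Real.cos x) / x ^ 2 :=
    setIntegral_congr_fun measurableSet_Ioi (fun x hx => hinner x hx)
  have hR : ∫ s in Ioi (0:ℝ), ∫ x in Ioi (0:ℝ), f x s =
      ∫ s in Ioi (0:ℝ), (1 + s ^ 2)⁻¹ := by
    apply setIntegral_congr_fun measurableSet_Ioi
    intro s hs
    have h1 : ∀ x : ℝ, f x s = s * (Real.exp (-(s * x)) * (1 - Real.cos x)) := by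
      intro x; rw [hf]; simp only; ring_nf
    simp only [h1]
    rw [integral_const_mul, lapl2_integral s hs]
    have hs0 : s ≠ 0 := ne_of_gt hs
    have hs1 : s ^ 2 + 1 ≠ 0 := by positivity
    have hs2 : 1 + s ^ 2 ≠ 0 := by positivity
    field_simp
    ring
  rw [hL] at hswap
  rw [hswap, hR]
  rw [integral_Ioi_inv_one_add_sq, Real.arctan_zero, sub_zero]

lemma key_r {r : ℝ} (hr : 0 < r) :
    ∫ x in Ioi (0:ℝ), (1 - Real.cos (r * x)) / x ^ 2 = r * (Real.pi / 2) := by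
  have h := integral_comp_mul_left_Ioi (fun u => (1 - Real.cos u) / u ^ 2) 0 hr
  rw [mul_zero] at h
  have h2 : ∫ x in Ioi (0:ℝ), (1 - Real.cos (r * x)) / x ^ 2
      = ∫ x in Ioi (0:ℝ), r ^ 2 * ((1 - Real.cos (r * x)) / (r * x) ^ 2) := by
    apply setIntegral_congr_fun measurableSet_Ioi
    intro x hx
    have hx0 : x ≠ 0 := ne_of_gt hx
    have hr0 : r ≠ 0 := ne_of_gt hr
    field_simp
  rw [h2, integral_const_mul, h, smul_eq_mul, key_integral]
  have hr0 : r ≠ 0 := ne_of_gt hr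
  field_simp

lemma hlim_pt (b α : ℝ) (hb : 0 < b) (hα0 : 0 < α) (φ : ℝ) (hφ : 0 < φ) :
    Tendsto (fun L : ℝ =>
        L ^ α * ((Real.exp (-(b * (φ / L) ^ α)) - 1) * (Real.cos φ - 1) / φ ^ 2))
      atTop (𝓝 (b * (φ ^ (α - 2) * (1 - Real.cos φ)))) := by
  set k := b * φ ^ α with hk
  have hk0 : 0 < k := mul_pos hb (Real.rpow_pos_of_pos hφ _)
  have h1 : Tendsto (fun y : ℝ => (Real.exp (-(k * y)) - 1) / y) (𝓝[≠] 0) (𝓝 (-k)) := by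
    have hd : HasDerivAt (fun v : ℝ => Real.exp (-(k * v))) (-k) 0 := by
      have h := (((hasDerivAt_id (0:ℝ)).const_mul k).neg).exp
      simpa using h
    have hs := hasDerivAt_iff_tendsto_slope.1 hd
    apply hs.congr'
    filter_upwards [self_mem_nhdsWithin] with y hy
    rw [slope_def_field]
    simp
  have h2 : Tendsto (fun L : ℝ => L ^ α) atTop atTop := tendsto_rpow_atTop hα0
  have h3 : Tendsto (fun y : ℝ => y⁻¹) atTop (𝓝[≠] (0:ℝ)) := by
    apply tendsto_nhdsWithin_of_tendsto_nhds_of_eventually_within _ tendsto_inv_atTop_zero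
    filter_upwards [eventually_gt_atTop 0] with y hy
    simp [inv_ne_zero (ne_of_gt hy)]
  have h4 := h1.comp (h3.comp h2)
  have h5 := h4.mul_const ((Real.cos φ - 1) / φ ^ 2)
  have hlimeq : -k * ((Real.cos φ - 1) / φ ^ 2) = b * (φ ^ (α - 2) * (1 - Real.cos φ)) := by
    have hφ2 : φ ^ (α - 2) = φ ^ α / φ ^ 2 := by rw [Real.rpow_sub hφ, Real.rpow_two]
    rw [hφ2, hk]
    have : φ ^ 2 ≠ 0 := by positivity
    field_simp
    ring
  rw [hlimeq] at h5
  apply h5.congr'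
  filter_upwards [eventually_gt_atTop 0] with L hL
  have hLα : (0:ℝ) < L ^ α := Real.rpow_pos_of_pos hL α
  have he : b * (φ / L) ^ α = k * (L ^ α)⁻¹ := by
    rw [Real.div_rpow hφ.le hL.le, hk]
    ring
  simp only [Function.comp_apply]
  rw [he]
  have h6 : (L ^ α)⁻¹ ≠ 0 := inv_ne_zero (ne_of_gt hLα)
  field_simp

lemma main_tendsto (α b : ℝ) (hα0 : 0 < α) (hα1 : α < 1) (hb : 0 < b) :
    Tendsto (fun L : ℝ => ∫ φ in Ioi (0:ℝ),
        L ^ α * ((Real.exp (-(b * (φ / L) ^ α)) - 1) * (Real.cos φ - 1) / φ ^ 2)) atTop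
      (𝓝 (∫ φ in Ioi (0:ℝ), b * (φ ^ (α - 2) * (1 - Real.cos φ)))) := by
  apply tendsto_integral_filter_of_dominated_convergence
    (bound := fun φ => b * (φ ^ (α - 2) * (1 - Real.cos φ)))
  · filter_upwards [eventually_gt_atTop (0:ℝ)] with L hL
    apply Measurable.aestronglyMeasurable
    fun_prop
  · filter_upwards [eventually_gt_atTop (0:ℝ)] with L hL
    filter_upwards [ae_restrict_mem measurableSet_Ioi] with φ hφ
    have hLα : (0:ℝ) < L ^ α := Real.rpow_pos_of_pos hL α
    set u := b * (φ / L) ^ α with hu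
    have hu0 : 0 ≤ u := mul_nonneg hb.le (Real.rpow_nonneg (div_nonneg hφ.le hL.le) α)
    have hA : |Real.exp (-u) - 1| ≤ u := by
      have hle : Real.exp (-u) ≤ 1 := Real.exp_le_one_iff.2 (by linarith)
      have hge := Real.add_one_le_exp (-u)
      rw [abs_of_nonpos (by linarith)]
      linarith
    have hB : |Real.cos φ - 1| = 1 - Real.cos φ := by
      rw [abs_of_nonpos (by nlinarith [Real.cos_le_one φ])]
      ring
    have hφ2 : (0:ℝ) < φ ^ 2 := pow_pos (mem_Ioi.mp hφ) 2
    calc ‖L ^ α * ((Real.exp (-u) - 1) * (Real.cos φ - 1) / φ ^ 2)‖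
        = L ^ α * (|Real.exp (-u) - 1| * |Real.cos φ - 1| / φ ^ 2) := by
          rw [Real.norm_eq_abs, abs_mul, abs_of_pos hLα, abs_div, abs_mul, abs_of_pos hφ2]
      _ ≤ L ^ α * (u * (1 - Real.cos φ) / φ ^ 2) := by
          rw [hB]
          gcongr
          exact one_sub_cos_nonneg φ
      _ = b * (φ ^ (α - 2) * (1 - Real.cos φ)) := by
          have hφα : φ ^ (α - 2) = φ ^ α / φ ^ 2 := by rw [Real.rpow_sub hφ, Real.rpow_two]
          rw [hu, Real.div_rpow hφ.le hL.le, hφα]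
          field_simp
  · have := (master hα0.le hα1 1).const_mul b
    simpa using this
  · filter_upwards [ae_restrict_mem measurableSet_Ioi] with φ hφ
    exact hlim_pt b α hb hα0 φ hφ

lemma numVar_eq (α c a t : ℝ) (hα0 : 0 < α) (hc : 0 < c) (ha : 0 < a) (ht : 0 < t)
    (L : ℝ) (hL : 0 < L) :
    L ^ (α - 1) * numVar α c a t L =
      2 / (Real.pi * a) * ∫ φ in Ioi (0:ℝ),
        L ^ α * ((Real.exp (-(2 * c * t * (φ / L) ^ α)) - 1) * (Real.cos φ - 1) / φ ^ 2) := by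
  set r := L / a with hr_def
  have hr : 0 < r := div_pos hL ha
  have hπ : Real.pi ≠ 0 := ne_of_gt Real.pi_pos
  have hInt2 : IntegrableOn (fun θ : ℝ => (Real.cos (r * θ) - 1) / θ ^ 2) (Ioi 0) := by
    have hfun : (fun θ : ℝ => (Real.cos (r * θ) - 1) / θ ^ 2)
        = fun θ => -((1 - Real.cos (r * θ)) / θ ^ 2) := by
      funext θ; ring
    rw [hfun]
    exact (int_one_sub_cos r).neg
  have hInt1 : IntegrableOn (fun θ : ℝ =>
      (Real.exp (-(2 * c * t * (θ / a) ^ α)) - 1) * (Real.cos (r * θ) - 1) / θ ^ 2) (Ioi 0) := by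
    apply Integrable.mono' (int_one_sub_cos r)
    · apply Measurable.aestronglyMeasurable
      fun_prop
    · filter_upwards [ae_restrict_mem measurableSet_Ioi] with θ hθ
      have hθ2 : (0:ℝ) < θ ^ 2 := pow_pos (mem_Ioi.mp hθ) 2
      have hE1 : |Real.exp (-(2 * c * t * (θ / a) ^ α)) - 1| ≤ 1 := by
        have h0 := Real.exp_pos (-(2 * c * t * (θ / a) ^ α))
        have h1 : Real.exp (-(2 * c * t * (θ / a) ^ α)) ≤ 1 := by
          rw [Real.exp_le_one_iff]
          have : 0 ≤ 2 * c * t * (θ / a) ^ α :=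
            mul_nonneg (by positivity) (Real.rpow_nonneg (div_nonneg hθ.le ha.le) α)
          linarith
        rw [abs_le]; constructor <;> linarith
      have hB : |Real.cos (r * θ) - 1| = 1 - Real.cos (r * θ) := by
        rw [abs_of_nonpos (by nlinarith [Real.cos_le_one (r * θ)])]
        ring
      calc ‖(Real.exp (-(2 * c * t * (θ / a) ^ α)) - 1) * (Real.cos (r * θ) - 1) / θ ^ 2‖
          = |Real.exp (-(2 * c * t * (θ / a) ^ α)) - 1| * |Real.cos (r * θ) - 1| / θ ^ 2 := by
            rw [Real.norm_eq_abs, abs_div, abs_mul, abs_of_pos hθ2]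
        _ ≤ 1 * (1 - Real.cos (r * θ)) / θ ^ 2 := by
            rw [hB]
            gcongr
            exact one_sub_cos_nonneg _
        _ = (1 - Real.cos (r * θ)) / θ ^ 2 := by rw [one_mul]
  have hsplit : (fun θ : ℝ =>
      Real.exp (-(2 * c * t * (θ / a) ^ α)) * (Real.cos (L * θ / a) - 1) / θ ^ 2)
      = fun θ => (Real.exp (-(2 * c * t * (θ / a) ^ α)) - 1) * (Real.cos (r * θ) - 1) / θ ^ 2
          + (Real.cos (r * θ) - 1) / θ ^ 2 := by
    funext θ
    have hLθ : L * θ / a = r * θ := by rw [hr_def]; ring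
    rw [hLθ]
    ring
  have hnum : numVar α c a t L = 2 / Real.pi * ∫ θ in Ioi (0:ℝ),
      (Real.exp (-(2 * c * t * (θ / a) ^ α)) - 1) * (Real.cos (r * θ) - 1) / θ ^ 2 := by
    unfold numVar
    rw [hsplit, integral_add hInt1 hInt2]
    have h2 : ∫ θ in Ioi (0:ℝ), (Real.cos (r * θ) - 1) / θ ^ 2 = -(r * (Real.pi / 2)) := by
      rw [← key_r hr, ← integral_neg]
      exact setIntegral_congr_fun measurableSet_Ioi (fun θ _ => by ring)
    rw [h2, hr_def]
    field_simp
    ring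
  have hsubs : ∫ θ in Ioi (0:ℝ),
        (Real.exp (-(2 * c * t * (θ / a) ^ α)) - 1) * (Real.cos (r * θ) - 1) / θ ^ 2
      = r * ∫ φ in Ioi (0:ℝ),
        (Real.exp (-(2 * c * t * (φ / L) ^ α)) - 1) * (Real.cos φ - 1) / φ ^ 2 := by
    have h := integral_comp_mul_left_Ioi
      (fun φ => (Real.exp (-(2 * c * t * (φ / L) ^ α)) - 1) * (Real.cos φ - 1) / φ ^ 2) 0 hr
    rw [mul_zero] at h
    have h2 : ∫ θ in Ioi (0:ℝ),
        (Real.exp (-(2 * c * t * (θ / a) ^ α)) - 1) * (Real.cos (r * θ) - 1) / θ ^ 2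
        = ∫ θ in Ioi (0:ℝ), r ^ 2 * ((Real.exp (-(2 * c * t * ((r * θ) / L) ^ α)) - 1)
            * (Real.cos (r * θ) - 1) / (r * θ) ^ 2) := by
      apply setIntegral_congr_fun measurableSet_Ioi
      intro θ hθ
      dsimp only
      have e1 : r * θ / L = θ / a := by
        rw [hr_def]
        field_simp
      rw [e1]
      have hθ0 : θ ≠ 0 := ne_of_gt hθ
      have hr0 : r ≠ 0 := ne_of_gt hr
      field_simp
    rw [h2, integral_const_mul, h, smul_eq_mul]
    have hr0 : r ≠ 0 := ne_of_gt hr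
    field_simp
  rw [hnum, hsubs, integral_const_mul]
  have hLpow : L ^ α = L ^ (α - 1) * L := by
    rw [← Real.rpow_add_one (ne_of_gt hL) (α - 1)]
    norm_num
  rw [hLpow, hr_def]
  field_simp

end Aux

theorem numVar_power_law_growth (α c a t : ℝ) (hα : α ∈ Set.Ioo (0:ℝ) 1)
    (hc : 0 < c) (ha : 0 < a) (ht : 0 < t) :
    0 < (4 * c * t / (a * Real.pi)) *
        (∫ φ in Set.Ioi (0:ℝ), φ ^ (α - 2) * (1 - Real.cos φ)) ∧
      Tendsto (fun L : ℝ => L ^ (α - 1) * numVar α c a t L) atTop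
        (nhds ((4 * c * t / (a * Real.pi)) *
          ∫ φ in Set.Ioi (0:ℝ), φ ^ (α - 2) * (1 - Real.cos φ))) := by
  obtain ⟨hα0, hα1⟩ := hα
  have hπ : (0:ℝ) < Real.pi := Real.pi_pos
  constructor
  · apply mul_pos (by positivity)
    have hnn : 0 ≤ᵐ[volume.restrict (Ioi (0:ℝ))]
        fun φ : ℝ => φ ^ (α - 2) * (1 - Real.cos φ) := by
      filter_upwards [ae_restrict_mem measurableSet_Ioi] with φ hφ
      exact mul_nonneg (Real.rpow_nonneg (le_of_lt hφ) _) (one_sub_cos_nonneg φ)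
    have hint : IntegrableOn (fun φ : ℝ => φ ^ (α - 2) * (1 - Real.cos φ)) (Ioi 0) := by
      have := master hα0.le hα1 1
      simpa using this
    rw [setIntegral_pos_iff_support_of_nonneg_ae hnn hint]
    have hsub : Ioc (Real.pi / 2) Real.pi ⊆
        (Function.support fun φ : ℝ => φ ^ (α - 2) * (1 - Real.cos φ)) ∩ Ioi 0 := by
      intro φ hφ
      have hφ0 : 0 < φ := lt_trans (by positivity) hφ.1
      refine ⟨?_, hφ0⟩
      have hcn : Real.cos φ ≤ 0 :=
        Real.cos_nonpos_of_pi_div_two_le_of_le (le_of_lt hφ.1) (by linarith [hφ.2])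
      have : 0 < φ ^ (α - 2) * (1 - Real.cos φ) :=
        mul_pos (Real.rpow_pos_of_pos hφ0 _) (by linarith)
      exact ne_of_gt this
    calc (0:ℝ≥0∞) < volume (Ioc (Real.pi / 2) Real.pi) := by
          rw [Real.volume_Ioc]
          apply ENNReal.ofReal_pos.2
          linarith
      _ ≤ _ := measure_mono hsub
  · have hb : 0 < 2 * c * t := by positivity
    have h1 := main_tendsto α (2 * c * t) hα0 hα1 hb
    have h2 := h1.const_mul (2 / (Real.pi * a))
    have hval : 2 / (Real.pi * a) * ∫ φ in Ioi (0:ℝ),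
          (2 * c * t) * (φ ^ (α - 2) * (1 - Real.cos φ))
        = (4 * c * t / (a * Real.pi)) * ∫ φ in Set.Ioi (0:ℝ), φ ^ (α - 2) * (1 - Real.cos φ) := by
      rw [integral_const_mul]
      field_simp
      ring
    rw [hval] at h2
    apply Filter.Tendsto.congr' _ h2
    filter_upwards [eventually_gt_atTop 0] with L hL
    exact (numVar_eq α c a t hα0 hc ha ht L hL).symm
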